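/- If every slice M_ξ = {z ∈ ℂⁿ : (ξ, z) ∈ M} is a convex subset of ℂⁿ, then for every compact subset K of M the partially holomorphic hull K̂_M is a compact subset of M. (This is the holomorphic-convexity part of the assertion that such an M is a Cartan manifold.) -/

import Mathlib

open scoped Manifold
open Set

instance {n : WithTop ℕ∞} : ContMDiffMul 𝓘(ℝ, ℂ) n ℂ where
  toIsManifold := inferInstance
  contMDiff_mul := by
    rw [contMDiff_iff]
    refine ⟨continuous_mul, fun x y => ?_⟩
    simp only [mfld_simps, chartAt_self_eq]
    rw [contDiffOn_univ]
    exact contDiff_mul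

/-- If every slice `M_ξ = {z ∈ ℂⁿ : (ξ, z) ∈ M}` of the open set `M ⊆ Ξ × ℂⁿ` is convex,
then for every compact `K ⊆ M` the partially holomorphic hull of `K` in `M` is a compact
subset of `M` (the holomorphic-convexity part of `M` being a Cartan manifold). -/
theorem stmt_1
    {E : Type*} [NormedAddCommGroup E] [NormedSpace ℝ E] [FiniteDimensional ℝ E]
    {H : Type*} [TopologicalSpace H] (I : ModelWithCorners ℝ E H)
    {Ξ : Type*} [TopologicalSpace Ξ] [ChartedSpace H Ξ]
    [IsManifold I ((⊤ : ℕ∞) : WithTop ℕ∞) Ξ] [T2Space Ξ] [SecondCountableTopology Ξ]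
    (n : ℕ) (M : Set (Ξ × (Fin n → ℂ))) (hM : IsOpen M)
    (hconv : ∀ ξ : Ξ, Convex ℝ {z : Fin n → ℂ | (ξ, z) ∈ M})
    (K : Set (Ξ × (Fin n → ℂ))) (hK : IsCompact K) (hKM : K ⊆ M) :
    IsCompact {x | x ∈ M ∧ ∀ f : Ξ × (Fin n → ℂ) → ℂ,
        ContMDiffOn (I.prod 𝓘(ℝ, Fin n → ℂ)) 𝓘(ℝ, ℂ) (⊤ : ℕ∞) f M →
        (∀ ξ : Ξ, DifferentiableOn ℂ (fun z => f (ξ, z)) {z | (ξ, z) ∈ M}) →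
        ‖f x‖ ≤ sSup ((fun y => ‖f y‖) '' K)} := by
  have : LocallyCompactSpace Ξ := Manifold.locallyCompact_of_finiteDimensional I
  set A := {x | x ∈ M ∧ ∀ f : Ξ × (Fin n → ℂ) → ℂ,
        ContMDiffOn (I.prod 𝓘(ℝ, Fin n → ℂ)) 𝓘(ℝ, ℂ) (⊤ : ℕ∞) f M →
        (∀ ξ : Ξ, DifferentiableOn ℂ (fun z => f (ξ, z)) {z | (ξ, z) ∈ M}) →
        ‖f x‖ ≤ sSup ((fun y => ‖f y‖) '' K)} with hAdef
  have hKfst : IsCompact (Prod.fst '' K) := hK.image continuous_fst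
  -- the radii
  set r : Fin n → ℝ := fun j => sSup ((fun y : Ξ × (Fin n → ℂ) => ‖y.2 j‖) '' K)
      with hrdef
  have hrnn : ∀ j, 0 ≤ r j := by
    intro j
    apply Real.sSup_nonneg
    rintro x ⟨y, -, rfl⟩
    positivity
  set R : ℝ := ∑ j, r j with hRdef
  have hRnn : 0 ≤ R := Finset.sum_nonneg fun j _ => hrnn j
  have hrR : ∀ j, r j ≤ R := fun j =>
    Finset.single_le_sum (fun i _ => hrnn i) (Finset.mem_univ j)
  -- A is contained in a compact set
  have hAC : A ⊆ (Prod.fst '' K) ×ˢ Metric.closedBall (0 : Fin n → ℂ) R := by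
    intro x hx
    constructor
    · -- first coordinate
      by_contra hx1
      obtain ⟨g, hg0, hg1, hg01⟩ :=
        exists_contMDiffMap_zero_one_of_isClosed (n := (⊤ : ℕ∞)) I hKfst.isClosed isClosed_singleton
          (disjoint_singleton_right.2 hx1)
      set f : Ξ × (Fin n → ℂ) → ℂ := fun p => (g p.1 : ℂ) with hfdef
      have hsm : ContMDiffOn (I.prod 𝓘(ℝ, Fin n → ℂ)) 𝓘(ℝ, ℂ) (⊤ : ℕ∞) f M :=
        (Complex.ofRealCLM.contDiff.comp_contMDiff
          (g.contMDiff.comp contMDiff_fst)).contMDiffOn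
      have hholo : ∀ ξ : Ξ, DifferentiableOn ℂ (fun z => f (ξ, z)) {z | (ξ, z) ∈ M} := by
        intro ξ
        rw [hfdef]
        show DifferentiableOn ℂ (fun _ : Fin n → ℂ => ((g ξ : ℝ) : ℂ)) {z | (ξ, z) ∈ M}
        exact differentiableOn_const _
      have hle := hx.2 f hsm hholo
      have hsup : sSup ((fun y => ‖f y‖) '' K) ≤ 0 := by
        apply Real.sSup_le _ le_rfl
        rintro _ ⟨y, hy, rfl⟩
        have : g y.1 = 0 := hg0 ⟨y, hy, rfl⟩
        simp [hfdef, this]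
      have hfx : ‖f x‖ = 1 := by
        have : g x.1 = 1 := hg1 rfl
        simp [hfdef, this]
      rw [hfx] at hle
      linarith
    · -- second coordinate
      have hj : ∀ j, ‖x.2 j‖ ≤ r j := by
        intro j
        set f : Ξ × (Fin n → ℂ) → ℂ := fun p => p.2 j with hfdef
        have hsm : ContMDiffOn (I.prod 𝓘(ℝ, Fin n → ℂ)) 𝓘(ℝ, ℂ) (⊤ : ℕ∞) f M :=
          ((ContinuousLinearMap.proj (R := ℝ) (φ := fun _ : Fin n => ℂ)
            j).contDiff.comp_contMDiff contMDiff_snd).contMDiffOn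
        have hholo : ∀ ξ : Ξ, DifferentiableOn ℂ (fun z => f (ξ, z)) {z | (ξ, z) ∈ M} :=
          fun ξ => (ContinuousLinearMap.proj (R := ℂ) (φ := fun _ : Fin n => ℂ)
            j).differentiable.differentiableOn
        exact hx.2 f hsm hholo
      rw [Metric.mem_closedBall, dist_zero_right]
      rw [pi_norm_le_iff_of_nonneg hRnn]
      intro j
      exact (hj j).trans (hrR j)
  have hC : IsCompact ((Prod.fst '' K) ×ˢ Metric.closedBall (0 : Fin n → ℂ) R) :=
    hKfst.prod (isCompact_closedBall _ _)
  -- boundary exclusion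
  have hbd : ∀ x0 ∈ closure A, x0 ∈ M := by
    intro x0 hx0
    by_contra hx0M
    set S : Set (Fin n → ℂ) := {z | (x0.1, z) ∈ M} with hSdef
    have hSopen : IsOpen S := hM.preimage (Continuous.prodMk_right x0.1)
    have hz0 : x0.2 ∉ S := fun h => hx0M (by rwa [hSdef, mem_setOf_eq, Prod.mk.eta] at h)
    obtain ⟨u, hu⟩ : ∃ u : (Fin n → ℂ) →L[ℝ] ℝ, ∀ z ∈ S, u z < u x0.2 :=
      geometric_hahn_banach_open_point (hconv x0.1) hSopen hz0
    set c : ℝ := u x0.2 with hcdef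
    set K0 : Set (Fin n → ℂ) := {z | (x0.1, z) ∈ K} with hK0def
    have hK0 : IsCompact K0 := by
      refine (hK.image continuous_snd).of_isClosed_subset
        (hK.isClosed.preimage (Continuous.prodMk_right x0.1)) ?_
      exact fun z hz => ⟨(x0.1, z), hz, rfl⟩
    obtain ⟨c', hc'c, hc'⟩ : ∃ c' < c, ∀ z ∈ K0, u z ≤ c' := by
      rcases K0.eq_empty_or_nonempty with h | h
      · exact ⟨c - 1, by linarith, by simp [h]⟩
      · obtain ⟨w, hwK0, hmax⟩ := hK0.exists_isMaxOn h u.continuous.continuousOn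
        exact ⟨u w, hu w (hKM hwK0), hmax⟩
    set mid : ℝ := (c + c') / 2 with hmiddef
    have hmidc : mid < c := by rw [hmiddef]; linarith
    have hc'mid : c' < mid := by rw [hmiddef]; linarith
    set B : Set (Ξ × (Fin n → ℂ)) := K ∩ {p | mid ≤ u p.2} with hBdef
    have hB : IsCompact B :=
      hK.inter_right (isClosed_le continuous_const (u.continuous.comp continuous_snd))
    have hξ0V : x0.1 ∉ Prod.fst '' B := by
      rintro ⟨p, ⟨hpK, hpu⟩, hp1⟩
      have hpK0 : p.2 ∈ K0 := by rw [hK0def, mem_setOf_eq, ← hp1, Prod.mk.eta]; exact hpK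
      have := hc' _ hpK0
      have := hpu
      simp only [mem_setOf_eq] at this
      linarith
    obtain ⟨g, hg0, hg1, hg01⟩ :=
      exists_contMDiffMap_zero_one_of_isClosed (n := (⊤ : ℕ∞)) I (hB.image continuous_fst).isClosed
        isClosed_singleton (disjoint_singleton_right.2 hξ0V)
    set ℓ : (Fin n → ℂ) →L[ℂ] ℂ := u.extendTo𝕜' with hldef
    have hre : ∀ z, (ℓ z).re = u z := by
      intro z
      rw [hldef]
      exact StrongDual.re_extendRCLike_apply (𝕜 := ℂ) u z
    set f : Ξ × (Fin n → ℂ) → ℂ := fun p => (g p.1 : ℂ) * Complex.exp (ℓ p.2) with hfdef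
    have habs : ∀ p, ‖f p‖ = g p.1 * Real.exp (u p.2) := by
      intro p
      rw [hfdef]
      simp only [norm_mul, Complex.norm_exp, hre, Complex.norm_real, Real.norm_eq_abs,
        abs_of_nonneg (hg01 p.1).1]
    have hsm : ContMDiffOn (I.prod 𝓘(ℝ, Fin n → ℂ)) 𝓘(ℝ, ℂ) (⊤ : ℕ∞) f M := by
      have h1 : ContMDiff (I.prod 𝓘(ℝ, Fin n → ℂ)) 𝓘(ℝ, ℂ) (⊤ : ℕ∞)
          (fun p : Ξ × (Fin n → ℂ) => (g p.1 : ℂ)) :=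
        Complex.ofRealCLM.contDiff.comp_contMDiff (g.contMDiff.comp contMDiff_fst)
      have h2 : ContMDiff (I.prod 𝓘(ℝ, Fin n → ℂ)) 𝓘(ℝ, ℂ) (⊤ : ℕ∞)
          (fun p : Ξ × (Fin n → ℂ) => Complex.exp (ℓ p.2)) :=
        (Complex.contDiff_exp.comp (ℓ.restrictScalars ℝ).contDiff).comp_contMDiff contMDiff_snd
      exact (h1.mul h2).contMDiffOn
    have hholo : ∀ ξ : Ξ, DifferentiableOn ℂ (fun z => f (ξ, z)) {z | (ξ, z) ∈ M} := by
      intro ξ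
      rw [hfdef]
      show DifferentiableOn ℂ (fun z : Fin n → ℂ => ((g ξ : ℝ) : ℂ) * Complex.exp (ℓ z))
        {z | (ξ, z) ∈ M}
      exact ((differentiable_const _).mul
        (Complex.differentiable_exp.comp ℓ.differentiable)).differentiableOn
    have hsupK : sSup ((fun y => ‖f y‖) '' K) ≤ Real.exp mid := by
      apply Real.sSup_le _ (Real.exp_pos _).le
      rintro _ ⟨y, hy, rfl⟩
      show ‖f y‖ ≤ Real.exp mid
      rw [habs]
      by_cases h1 : y.1 ∈ Prod.fst '' B
      · have h0 : g y.1 = 0 := hg0 h1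
        rw [h0, zero_mul]
        exact (Real.exp_pos _).le
      · have hyB : ¬ mid ≤ u y.2 := fun h => h1 ⟨y, ⟨hy, h⟩, rfl⟩
        calc g y.1 * Real.exp (u y.2) ≤ 1 * Real.exp (u y.2) :=
              mul_le_mul_of_nonneg_right (hg01 y.1).2 (Real.exp_pos _).le
          _ ≤ Real.exp mid := by
              rw [one_mul]; exact Real.exp_le_exp.2 (not_le.1 hyB).le
    set U : Set (Ξ × (Fin n → ℂ)) :=
      {p | Real.exp mid < g p.1 * Real.exp (u p.2)} with hUdef
    have hUopen : IsOpen U := by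
      apply isOpen_lt continuous_const
      exact (g.contMDiff.continuous.comp continuous_fst).mul
        (Real.continuous_exp.comp (u.continuous.comp continuous_snd))
    have hx0U : x0 ∈ U := by
      have h1 : g x0.1 = 1 := hg1 rfl
      rw [hUdef, mem_setOf_eq, h1, one_mul]
      exact Real.exp_lt_exp.2 hmidc
    obtain ⟨a, haU, haA⟩ := mem_closure_iff.1 hx0 U hUopen hx0U
    have hle := haA.2 f hsm hholo
    rw [habs] at hle
    have hgt : Real.exp mid < g a.1 * Real.exp (u a.2) := haU
    linarith [hle.trans hsupK]
  -- A is closed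
  have hAclosed : IsClosed A := by
    refine isClosed_of_closure_subset fun x0 hx0 => ?_
    have hx0M : x0 ∈ M := hbd x0 hx0
    refine ⟨hx0M, fun f hf1 hf2 => ?_⟩
    have hcf : ContinuousAt f x0 := hf1.continuousOn.continuousAt (hM.mem_nhds hx0M)
    have ht : Filter.Tendsto (fun x => ‖f x‖) (nhdsWithin x0 A)
        (nhds (‖f x0‖)) :=
      (continuous_norm.continuousAt.comp hcf).mono_left nhdsWithin_le_nhds
    have hne : (nhdsWithin x0 A).NeBot := mem_closure_iff_nhdsWithin_neBot.1 hx0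
    exact le_of_tendsto ht
      (Filter.mem_of_superset self_mem_nhdsWithin fun a ha => ha.2 f hf1 hf2)
  exact hC.of_isClosed_subset hAclosed hAC
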